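/- Let G(V) be a finite connected network. If S ⊆ V and ε > 0 satisfy R_eff(u,v) ≥ ε for all distinct u,v ∈ S, then there exists a subset S' ⊆ S with |S'| ≥ |S|/2 such that for every v ∈ S', R_eff(v, S∖{v}) ≥ ε/4. -/

import Mathlib

open scoped ENNReal

/-- Dirichlet energy of a function on a network. -/
noncomputable def energy {V : Type*} [Fintype V] (c : V → V → ℝ) (f : V → ℝ) : ℝ :=
  (1 / 2) * ∑ x, ∑ y, c x y * (f x - f y) ^ 2

/-- A network is connected if only constant functions have zero energy. -/
def Connected {V : Type*} [Fintype V] (c : V → V → ℝ) : Prop :=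
  ∀ f : V → ℝ, energy c f = 0 → ∀ x y, f x = f y

/-- Effective resistance between two vertex sets, valued in `ℝ≥0∞` (via the Dirichlet
principle for the effective conductance; the resistance to the empty set is `∞`). -/
noncomputable def effResE {V : Type*} [Fintype V] (c : V → V → ℝ) (A B : Set V) : ℝ≥0∞ :=
  (sInf {e : ℝ≥0∞ | ∃ f : V → ℝ,
    (∀ a ∈ A, f a = 1) ∧ (∀ b ∈ B, f b = 0) ∧ e = ENNReal.ofReal (energy c f)})⁻¹

namespace StrongSepAux

open Finset

variable {V : Type*} [Fintype V]

noncomputable def B (c : V → V → ℝ) (f g : V → ℝ) : ℝ :=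
  (1 / 2) * ∑ x, ∑ y, c x y * (f x - f y) * (g x - g y)

lemma energy_eq_B (c : V → V → ℝ) (f : V → ℝ) : energy c f = B c f f := by
  unfold energy B
  congr 1
  exact Finset.sum_congr rfl fun x _ => Finset.sum_congr rfl fun y _ => by ring

lemma B_symm (c : V → V → ℝ) (f g : V → ℝ) : B c f g = B c g f := by
  unfold B; congr 1; exact sum_congr rfl fun x _ => sum_congr rfl fun y _ => by ring

lemma B_add_right (c : V → V → ℝ) (f g₁ g₂ : V → ℝ) :
    B c f (g₁ + g₂) = B c f g₁ + B c f g₂ := by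
  simp only [B, Pi.add_apply]
  rw [← mul_add, ← Finset.sum_add_distrib]
  congr 1
  refine sum_congr rfl fun x _ => ?_
  rw [← Finset.sum_add_distrib]
  exact sum_congr rfl fun y _ => by ring

lemma B_smul_right (c : V → V → ℝ) (r : ℝ) (f g : V → ℝ) :
    B c f (r • g) = r * B c f g := by
  simp only [B, Pi.smul_apply, smul_eq_mul, Finset.mul_sum]
  exact sum_congr rfl fun x _ => sum_congr rfl fun y _ => by ring

lemma B_sub_right (c : V → V → ℝ) (f g₁ g₂ : V → ℝ) :
    B c f (g₁ - g₂) = B c f g₁ - B c f g₂ := by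
  simp only [B, Pi.sub_apply]
  rw [← mul_sub, ← Finset.sum_sub_distrib]
  congr 1
  refine sum_congr rfl fun x _ => ?_
  rw [← Finset.sum_sub_distrib]
  exact sum_congr rfl fun y _ => by ring

lemma B_const_right (c : V → V → ℝ) (f : V → ℝ) (k : ℝ) : B c f (fun _ => k) = 0 := by
  simp [B]

lemma B_zero_right (c : V → V → ℝ) (f : V → ℝ) : B c f 0 = 0 :=
  B_const_right c f 0

lemma B_sum_right (c : V → V → ℝ) (f : V → ℝ) {ι : Type*} (t : Finset ι) (F : ι → V → ℝ) :
    B c f (∑ s ∈ t, F s) = ∑ s ∈ t, B c f (F s) := by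
  classical
  induction t using Finset.induction_on with
  | empty => simpa using B_zero_right c f
  | @insert a s hnot ih =>
    rw [Finset.sum_insert hnot, Finset.sum_insert hnot, B_add_right, ih]

lemma B_nonneg (c : V → V → ℝ) (hnn : ∀ a b, 0 ≤ c a b) (f : V → ℝ) : 0 ≤ B c f f := by
  apply mul_nonneg (by norm_num)
  refine Finset.sum_nonneg fun x _ => Finset.sum_nonneg fun y _ => ?_
  rw [mul_assoc]
  exact mul_nonneg (hnn x y) (mul_self_nonneg _)

lemma B_expand (c : V → V → ℝ) (f w : V → ℝ) (t : ℝ) :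
    B c (f + t • w) (f + t • w)
      = B c f f + 2 * t * B c f w + t ^ 2 * B c w w := by
  have e1 : ∀ g : V → ℝ, B c g (f + t • w) = B c g f + t * B c g w := fun g => by
    rw [B_add_right, B_smul_right]
  rw [e1, B_symm c (f + t • w) f, B_symm c (f + t • w) w, e1, e1, B_symm c w f]
  ring

noncomputable def ind [DecidableEq V] (u : V) : V → ℝ := fun x => if x = u then 1 else 0

lemma B_ind [DecidableEq V] (c : V → V → ℝ) (hsymm : ∀ a b, c a b = c b a)
    (f : V → ℝ) (u : V) :
    B c f (ind u) = ∑ y, c u y * (f u - f y) := by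
  have key : ∀ x y : V, c x y * (f x - f y) * (ind u x - ind u y)
      = (if x = u then c x y * (f x - f y) else 0)
        - (if y = u then c x y * (f x - f y) else 0) := by
    intro x y; simp only [ind]; split_ifs <;> ring
  simp only [B, key, Finset.sum_sub_distrib]
  have t1 : ∀ x : V, (∑ y, if x = u then c x y * (f x - f y) else 0)
      = if x = u then ∑ y, c x y * (f x - f y) else 0 := by
    intro x; split_ifs <;> simp
  simp only [t1]
  rw [Finset.sum_ite_eq' Finset.univ u (fun x => ∑ y, c x y * (f x - f y))]
  have t2 : ∀ x : V, (∑ y, if y = u then c x y * (f x - f y) else 0)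
      = c x u * (f x - f u) := by
    intro x; rw [Finset.sum_ite_eq' Finset.univ u (fun y => c x y * (f x - f y))]; simp
  simp only [t2, if_pos (Finset.mem_univ u)]
  rw [← Finset.sum_sub_distrib]
  have t3 : ∀ y : V, c u y * (f u - f y) - c y u * (f y - f u)
      = 2 * (c u y * (f u - f y)) := by
    intro y; rw [hsymm y u]; ring
  rw [Finset.sum_congr rfl fun y _ => t3 y, ← Finset.mul_sum]
  ring

noncomputable def clamp (m M a : ℝ) : ℝ := max m (min M a)

lemma clamp_sq {m M : ℝ} (a b : ℝ) :
    (clamp m M a - clamp m M b) ^ 2 ≤ (a - b) ^ 2 := by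
  simp only [clamp, max_def, min_def]
  split_ifs <;> nlinarith

lemma clamp_mem {m M : ℝ} (hmM : m ≤ M) (a : ℝ) : clamp m M a ∈ Set.Icc m M := by
  constructor
  · exact le_max_left _ _
  · simp only [clamp, max_le_iff]
    exact ⟨hmM, min_le_left _ _⟩

lemma clamp_eq {m M a : ℝ} (h : a ∈ Set.Icc m M) : clamp m M a = a := by
  simp only [clamp]
  rw [min_eq_right h.2, max_eq_right h.1]

lemma B_clamp_le {m M : ℝ} (c : V → V → ℝ) (hnn : ∀ a b, 0 ≤ c a b) (f : V → ℝ) :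
    B c (fun x => clamp m M (f x)) (fun x => clamp m M (f x)) ≤ B c f f := by
  unfold B
  apply mul_le_mul_of_nonneg_left _ (by norm_num : (0:ℝ) ≤ 1/2)
  refine Finset.sum_le_sum fun x _ => Finset.sum_le_sum fun y _ => ?_
  have := clamp_sq (m := m) (M := M) (f x) (f y)
  nlinarith [hnn x y]

lemma exists_H [Nonempty V] (c : V → V → ℝ) (hnn : ∀ a b, 0 ≤ c a b)
    (S : Set V) (f : V → ℝ) (m M : ℝ) (hf : ∀ x, f x ∈ Set.Icc m M) :
    ∃ h : V → ℝ, (∀ s ∈ S, h s = f s) ∧ (∀ x, h x ∈ Set.Icc m M) ∧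
      ∀ w : V → ℝ, (∀ s ∈ S, w s = 0) → B c h w = 0 := by
  classical
  have hmM : m ≤ M := le_trans (hf (Classical.arbitrary V)).1 (hf _).2
  set K : Set (V → ℝ) := {h | (∀ x, h x ∈ Set.Icc m M) ∧ ∀ s ∈ S, h s = f s} with hK
  have hKcl2 : IsClosed {h : V → ℝ | ∀ s ∈ S, h s = f s} := by
    have he : {h : V → ℝ | ∀ s ∈ S, h s = f s} = ⋂ s ∈ S, {h : V → ℝ | h s = f s} := by
      ext g; simp
    rw [he]
    exact isClosed_biInter fun s _ => isClosed_eq (continuous_apply s) continuous_const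
  have hKeq : K = (Set.univ.pi fun _ : V => Set.Icc m M) ∩ {h | ∀ s ∈ S, h s = f s} := by
    ext g
    simp [hK, Set.mem_pi, Set.mem_Icc, Pi.le_def, forall_and]
  have hKcomp : IsCompact K := by
    rw [hKeq]
    exact (isCompact_univ_pi fun _ => isCompact_Icc).inter_right hKcl2
  have hcont : Continuous fun h : V → ℝ => B c h h := by
    unfold B
    apply Continuous.mul continuous_const
    refine continuous_finset_sum _ fun x _ => continuous_finset_sum _ fun y _ => ?_
    exact (continuous_const.mul ((continuous_apply x).sub (continuous_apply y))).mul
      ((continuous_apply x).sub (continuous_apply y))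
  have hKne : K.Nonempty := ⟨f, fun x => hf x, fun s _ => rfl⟩
  obtain ⟨h, hhK, hmin⟩ := hKcomp.exists_isMinOn hKne hcont.continuousOn
  refine ⟨h, hhK.2, hhK.1, ?_⟩
  intro w hw
  have hq : 0 ≤ B c w w := B_nonneg c hnn w
  have key : ∀ t : ℝ, 0 ≤ 2 * t * B c h w + t ^ 2 * B c w w := by
    intro t
    have hcl : (fun x => clamp m M ((h + t • w) x)) ∈ K := by
      constructor
      · exact fun x => clamp_mem hmM _
      · intro s hs
        have hv : (h + t • w) s = f s := by
          simp [hw s hs, hhK.2 s hs]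
        show clamp m M ((h + t • w) s) = f s
        rw [hv, clamp_eq (hf s)]
    have h1 : B c h h ≤ B c (fun x => clamp m M ((h + t • w) x))
        (fun x => clamp m M ((h + t • w) x)) := isMinOn_iff.mp hmin _ hcl
    have h2 : B c (fun x => clamp m M ((h + t • w) x)) (fun x => clamp m M ((h + t • w) x))
        ≤ B c (h + t • w) (h + t • w) := B_clamp_le c hnn _
    have h3 := B_expand c h w t
    linarith
  rcases eq_or_lt_of_le hq with hq0 | hq0
  · have hk := key (-B c h w)
    nlinarith [sq_nonneg (B c h w)]
  · have hk := key (-(B c h w / B c w w))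
    have hb2 : (B c h w) ^ 2 ≤ 0 := by
      have hne : B c w w ≠ 0 := ne_of_gt hq0
      have hrw : 2 * -(B c h w / B c w w) * B c h w + (-(B c h w / B c w w)) ^ 2 * B c w w
          = -((B c h w) ^ 2 / B c w w) := by
        field_simp
        ring
      rw [hrw] at hk
      have h8 : (B c h w) ^ 2 / B c w w ≤ 0 := by linarith
      rcases div_nonpos_iff.mp h8 with ⟨h9a, h9b⟩ | ⟨h9a, h9b⟩ <;> linarith
    have := sq_nonneg (B c h w)
    have h6 : (B c h w)^2 = 0 := le_antisymm hb2 this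
    exact pow_eq_zero_iff (by norm_num) |>.mp h6

end StrongSepAux

open StrongSepAux

/-- If all pairwise effective resistances inside `S ⊆ V` are at least `ε`, then at least half
of the points `v` of `S` satisfy `R_eff(v, S∖{v}) ≥ ε/4`. -/
theorem exists_half_strongly_separated {V : Type*} [Fintype V] [DecidableEq V]
    (c : V → V → ℝ) (hsymm : ∀ a b, c a b = c b a) (hnn : ∀ a b, 0 ≤ c a b)
    (hconn : Connected c)
    (S : Set V) (ε : ℝ) (hε : 0 < ε)
    (hsep : ∀ u ∈ S, ∀ v ∈ S, u ≠ v → ENNReal.ofReal ε ≤ effResE c {u} {v}) :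
    ∃ S' ⊆ S, S.ncard ≤ 2 * S'.ncard ∧
      ∀ v ∈ S', ENNReal.ofReal (ε / 4) ≤ effResE c {v} (S \ {v}) := by
  classical
  rcases S.eq_empty_or_nonempty with hSe | ⟨v₀, hv₀⟩
  · exact ⟨∅, by simp, by simp [hSe], by simp⟩
  haveI : Nonempty V := ⟨v₀⟩
  haveI : Fintype ↥S := (Set.toFinite S).fintype
  set 𝒮 : Finset V := S.toFinset with h𝒮
  have mem𝒮 : ∀ x, x ∈ 𝒮 ↔ x ∈ S := fun x => Set.mem_toFinset
  have hv₀𝒮 : v₀ ∈ 𝒮 := (mem𝒮 v₀).mpr hv₀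
  -- harmonic extensions of point indicators
  have hHe : ∀ u : V, ∃ h : V → ℝ, (∀ s ∈ S, h s = ind u s) ∧
      (∀ x, h x ∈ Set.Icc (0:ℝ) 1) ∧
      ∀ w : V → ℝ, (∀ s ∈ S, w s = 0) → B c h w = 0 := by
    intro u
    apply exists_H c hnn S (ind u) 0 1
    intro x
    simp only [ind, Set.mem_Icc]
    split_ifs <;> norm_num
  choose h hagree hIcc hharm using hHe
  -- general harmonic extension
  have hHg : ∀ f : V → ℝ, ∃ hf : V → ℝ, (∀ s ∈ S, hf s = f s) ∧
      ∀ w : V → ℝ, (∀ s ∈ S, w s = 0) → B c hf w = 0 := by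
    intro f
    obtain ⟨hf, h1, _, h3⟩ := exists_H c hnn S f
      (Finset.univ.inf' Finset.univ_nonempty f) (Finset.univ.sup' Finset.univ_nonempty f)
      (fun x => ⟨Finset.inf'_le f (Finset.mem_univ x), Finset.le_sup' f (Finset.mem_univ x)⟩)
    exact ⟨hf, h1, h3⟩
  choose Hf hHfa hHfh using hHg
  set ℓ : V → V → ℝ := fun u v => B c (h u) (h v) with hℓ
  have hℓdef : ∀ u v, ℓ u v = B c (h u) (h v) := fun _ _ => rfl
  -- locality of harmonic pairings
  have loc : ∀ f : V → ℝ, (∀ w : V → ℝ, (∀ s ∈ S, w s = 0) → B c f w = 0) →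
      ∀ g₁ g₂ : V → ℝ, (∀ s ∈ S, g₁ s = g₂ s) → B c f g₁ = B c f g₂ := by
    intro f hf g₁ g₂ hg
    have h0 := hf (g₁ - g₂) (fun s hs => by simp [hg s hs])
    rw [B_sub_right] at h0
    linarith
  have ℓsymm : ∀ u v, ℓ u v = ℓ v u := fun u v => B_symm c (h u) (h v)
  have expand1 : ∀ f : V → ℝ, (∀ w, (∀ s ∈ S, w s = 0) → B c f w = 0) →
      ∀ g : V → ℝ, B c f g = ∑ s ∈ 𝒮, g s * B c f (h s) := by
    intro f hf g
    have h1 : B c f g = B c f (∑ s ∈ 𝒮, g s • ind s) := by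
      apply loc f hf
      intro x hx
      have hx𝒮 : x ∈ 𝒮 := (mem𝒮 x).mpr hx
      rw [Finset.sum_apply]
      rw [Finset.sum_eq_single x (fun b _ hbx => by
          simp [ind, if_neg (Ne.symm hbx)]) (fun hc => absurd hx𝒮 hc)]
      simp [ind]
    rw [h1, B_sum_right]
    refine Finset.sum_congr rfl fun s hs => ?_
    rw [B_smul_right]
    congr 1
    exact loc f hf (ind s) (h s) (fun x hx' => (hagree s x hx').symm)
  have hexp : ∀ (s : V) (f : V → ℝ), B c (h s) f = ∑ t ∈ 𝒮, f t * ℓ s t := by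
    intro s f
    rw [expand1 (h s) (hharm s) f]
  have rowsum : ∀ u, ∑ t ∈ 𝒮, ℓ u t = 0 := by
    intro u
    have h0 : B c (h u) (fun _ => (1:ℝ)) = 0 := B_const_right c (h u) 1
    have h1 := hexp u (fun _ => (1:ℝ))
    rw [h0] at h1
    simpa using h1.symm
  have offdiag : ∀ u ∈ S, ∀ v ∈ S, u ≠ v → ℓ u v ≤ 0 := by
    intro u hu v hv huv
    have e1 : ℓ u v = B c (h v) (ind u) := by
      rw [hℓdef, B_symm]
      exact loc (h v) (hharm v) (h u) (ind u) (fun x hx => hagree u x hx)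
    rw [e1, B_ind c hsymm (h v) u]
    have hvu : h v u = 0 := by
      rw [hagree v u hu]
      simp [ind, (show u ≠ v from huv)]
    refine Finset.sum_nonpos fun y _ => ?_
    rw [hvu]
    have := (hIcc v y).1
    nlinarith [hnn u y]
  -- the linear solve for unit-current potentials
  set A : (V → ℝ) →ₗ[ℝ] (V → ℝ) :=
    { toFun := fun g => fun x => if x ∈ S then ∑ t ∈ 𝒮, ℓ x t * g t else g x
      map_add' := by
        intro g₁ g₂
        funext x
        by_cases hx : x ∈ S <;> simp [hx, mul_add, Finset.sum_add_distrib]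
      map_smul' := by
        intro r g
        funext x
        by_cases hx : x ∈ S <;> simp [hx, Finset.mul_sum, mul_left_comm] } with hA
  have hAdef : ∀ g x, A g x = if x ∈ S then ∑ t ∈ 𝒮, ℓ x t * g t else g x := fun _ _ => rfl
  set σ : (V → ℝ) →ₗ[ℝ] ℝ :=
    { toFun := fun g => ∑ s ∈ 𝒮, g s
      map_add' := by intro g₁ g₂; simp [Finset.sum_add_distrib]
      map_smul' := by intro r g; simp [Finset.mul_sum] } with hσ
  have hσdef : ∀ g, σ g = ∑ s ∈ 𝒮, g s := fun _ => rfl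
  have hrangeA : LinearMap.range A ≤ LinearMap.ker σ := by
    rintro _ ⟨g, rfl⟩
    rw [LinearMap.mem_ker, hσdef]
    rw [Finset.sum_congr rfl (fun s hs => show A g s = ∑ t ∈ 𝒮, ℓ s t * g t from by
      rw [hAdef, if_pos ((mem𝒮 s).mp hs)])]
    rw [Finset.sum_comm]
    refine Finset.sum_eq_zero fun t _ => ?_
    rw [← Finset.sum_mul, Finset.sum_congr rfl (fun s _ => ℓsymm s t), rowsum t, zero_mul]
  set indS : V → ℝ := fun x => if x ∈ S then 1 else 0 with hindS
  have hindS0 : indS ≠ 0 := by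
    intro hc
    have := congrFun hc v₀
    simp [hindS, hv₀] at this
  have kerA : LinearMap.ker A ≤ Submodule.span ℝ {indS} := by
    intro g hg
    have hg0 : ∀ x, A g x = 0 := fun x => congrFun (LinearMap.mem_ker.mp hg) x
    have hoff : ∀ x, x ∉ S → g x = 0 := fun x hx => by
      have := hg0 x; rwa [hAdef, if_neg hx] at this
    have hqg : B c (Hf g) (Hf g) = 0 := by
      rw [expand1 (Hf g) (hHfh g) (Hf g)]
      refine Finset.sum_eq_zero fun s hs => ?_
      have hsS := (mem𝒮 s).mp hs
      have e1 : B c (Hf g) (h s) = ∑ t ∈ 𝒮, g t * ℓ s t := by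
        rw [B_symm, hexp s (Hf g)]
        exact Finset.sum_congr rfl fun t ht => by rw [hHfa g t ((mem𝒮 t).mp ht)]
      have e2 : ∑ t ∈ 𝒮, g t * ℓ s t = 0 := by
        have h0 := hg0 s
        rw [hAdef, if_pos hsS] at h0
        rw [Finset.sum_congr rfl fun t _ => mul_comm (g t) (ℓ s t)]
        exact h0
      rw [e1, e2, mul_zero]
    have hconst := hconn (Hf g) (by rw [energy_eq_B]; exact hqg)
    refine Submodule.mem_span_singleton.mpr ⟨g v₀, ?_⟩
    funext x
    by_cases hx : x ∈ S
    · have : g x = g v₀ := by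
        rw [← hHfa g x hx, ← hHfa g v₀ hv₀]
        exact hconst x v₀
      simp [hindS, hx, this]
    · simp [hindS, hx, hoff x hx]
  have hσsurj : LinearMap.range σ = ⊤ := by
    rw [LinearMap.range_eq_top]
    intro r
    refine ⟨fun x => if x = v₀ then r else 0, ?_⟩
    rw [hσdef, Finset.sum_ite_eq' 𝒮 v₀ fun _ => r, if_pos hv₀𝒮]
  have hrange_eq : LinearMap.range A = LinearMap.ker σ := by
    have h1 := LinearMap.finrank_range_add_finrank_ker σ
    rw [hσsurj, finrank_top, Module.finrank_self, Module.finrank_fintype_fun_eq_card] at h1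
    have h2 := LinearMap.finrank_range_add_finrank_ker A
    rw [Module.finrank_fintype_fun_eq_card] at h2
    have hk1 : Module.finrank ℝ (LinearMap.ker A) ≤ 1 := by
      calc Module.finrank ℝ (LinearMap.ker A)
          ≤ Module.finrank ℝ (Submodule.span ℝ {indS}) := Submodule.finrank_mono kerA
        _ = 1 := finrank_span_singleton hindS0
    exact Submodule.eq_of_le_of_finrank_le hrangeA (by omega)
  have solve : ∀ u ∈ S, ∃ ψ : V → ℝ, (∀ w, (∀ s ∈ S, w s = 0) → B c ψ w = 0) ∧
      ∀ s ∈ S, B c (h s) ψ = (if s = u then (1:ℝ) else 0) - (if s = v₀ then 1 else 0) := by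
    intro u hu
    have hb : (fun x => (if x = u then (1:ℝ) else 0) - (if x = v₀ then 1 else 0))
        ∈ LinearMap.ker σ := by
      rw [LinearMap.mem_ker, hσdef, Finset.sum_sub_distrib,
        Finset.sum_ite_eq' 𝒮 u fun _ => (1:ℝ), Finset.sum_ite_eq' 𝒮 v₀ fun _ => (1:ℝ),
        if_pos ((mem𝒮 u).mpr hu), if_pos hv₀𝒮, sub_self]
    rw [← hrange_eq] at hb
    obtain ⟨g, hg⟩ := hb
    refine ⟨Hf g, hHfh g, ?_⟩
    intro s hs
    have e1 : B c (h s) (Hf g) = ∑ t ∈ 𝒮, g t * ℓ s t := by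
      rw [hexp s (Hf g)]
      exact Finset.sum_congr rfl fun t ht => by rw [hHfa g t ((mem𝒮 t).mp ht)]
    rw [e1]
    have h0 := congrFun hg s
    rw [hAdef, if_pos hs] at h0
    rw [Finset.sum_congr rfl fun t _ => mul_comm (g t) (ℓ s t)]
    exact h0
  choose! ψ ψharm ψval using solve
  -- pair potentials and resistances
  set ρ : V → V → ℝ := fun u v => (ψ u u - ψ v u) - (ψ u v - ψ v v) with hρ
  have hρdef : ∀ u v, ρ u v = (ψ u u - ψ v u) - (ψ u v - ψ v v) := fun _ _ => rfl
  have φharm : ∀ u ∈ S, ∀ v ∈ S, ∀ w, (∀ s ∈ S, w s = 0) → B c (ψ u - ψ v) w = 0 := by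
    intro u hu v hv w hw
    rw [B_symm, B_sub_right, B_symm c w (ψ u), B_symm c w (ψ v),
      ψharm u hu w hw, ψharm v hv w hw, sub_zero]
  have φval : ∀ u ∈ S, ∀ v ∈ S, ∀ s ∈ S, B c (h s) (ψ u - ψ v)
      = (if s = u then (1:ℝ) else 0) - (if s = v then 1 else 0) := by
    intro u hu v hv s hs
    rw [B_sub_right, ψval u hu s hs, ψval v hv s hs]
    ring
  have hEφ : ∀ u ∈ S, ∀ v ∈ S, B c (ψ u - ψ v) (ψ u - ψ v) = ρ u v := by
    intro u hu v hv
    rw [expand1 _ (φharm u hu v hv) _]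
    rw [Finset.sum_congr rfl (fun s hs => show (ψ u - ψ v) s * B c (ψ u - ψ v) (h s)
        = (ψ u s - ψ v s) * ((if s = u then (1:ℝ) else 0) - (if s = v then 1 else 0)) from by
      rw [Pi.sub_apply, B_symm, φval u hu v hv s ((mem𝒮 s).mp hs)])]
    simp only [mul_sub, Finset.sum_sub_distrib, mul_ite, mul_one, mul_zero]
    rw [Finset.sum_ite_eq' 𝒮 u fun s => ψ u s - ψ v s,
      Finset.sum_ite_eq' 𝒮 v fun s => ψ u s - ψ v s,
      if_pos ((mem𝒮 u).mpr hu), if_pos ((mem𝒮 v).mpr hv)]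
  have hρpos : ∀ u ∈ S, ∀ v ∈ S, u ≠ v → 0 < ρ u v := by
    intro u hu v hv huv
    have h0 : 0 ≤ ρ u v := by
      rw [← hEφ u hu v hv]; exact B_nonneg c hnn _
    rcases h0.lt_or_eq with h1 | h1
    · exact h1
    · exfalso
      have hz : B c (ψ u - ψ v) (ψ u - ψ v) = 0 := by rw [hEφ u hu v hv, ← h1]
      have hconst := hconn (ψ u - ψ v) (by rw [energy_eq_B]; exact hz)
      have hfe : (ψ u - ψ v) = fun _ => (ψ u - ψ v) u := funext fun x => hconst x u
      have h2 := φval u hu v hv u hu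
      rw [hfe, B_const_right] at h2
      simp [huv] at h2
  have hρge : ∀ u ∈ S, ∀ v ∈ S, u ≠ v → ε ≤ ρ u v := by
    intro u hu v hv huv
    have hρp := hρpos u hu v hv huv
    have hfeas : ∀ f : V → ℝ, f u = 1 → f v = 0 → 1 / ρ u v ≤ energy c f := by
      intro f hfu hfv
      have hBφf : B c (ψ u - ψ v) f = 1 := by
        rw [expand1 _ (φharm u hu v hv) f]
        rw [Finset.sum_congr rfl (fun s hs => show f s * B c (ψ u - ψ v) (h s)
            = f s * ((if s = u then (1:ℝ) else 0) - (if s = v then 1 else 0)) from by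
          rw [B_symm, φval u hu v hv s ((mem𝒮 s).mp hs)])]
        simp only [mul_sub, Finset.sum_sub_distrib, mul_ite, mul_one, mul_zero]
        rw [Finset.sum_ite_eq' 𝒮 u f, Finset.sum_ite_eq' 𝒮 v f,
          if_pos ((mem𝒮 u).mpr hu), if_pos ((mem𝒮 v).mpr hv), hfu, hfv, sub_zero]
      have hkey := B_nonneg c hnn (f + (-(1 / ρ u v)) • (ψ u - ψ v))
      rw [B_expand c f (ψ u - ψ v) (-(1 / ρ u v)), hEφ u hu v hv,
        B_symm c f (ψ u - ψ v), hBφf] at hkey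
      have hsq : (-(1 / ρ u v)) ^ 2 * ρ u v = 1 / ρ u v := by
        rw [neg_sq, div_pow, one_pow, pow_two]
        field_simp
      rw [energy_eq_B]
      nlinarith [hkey, hsq]
    have hlb : ENNReal.ofReal (1 / ρ u v) ≤ sInf {e : ℝ≥0∞ | ∃ f : V → ℝ,
        (∀ a ∈ ({u} : Set V), f a = 1) ∧ (∀ b ∈ ({v} : Set V), f b = 0) ∧
        e = ENNReal.ofReal (energy c f)} := by
      refine le_sInf ?_
      rintro e ⟨f, hf1, hf0, rfl⟩
      exact ENNReal.ofReal_le_ofReal (hfeas f (hf1 u rfl) (hf0 v rfl))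
    have h2 : effResE c {u} {v} ≤ ENNReal.ofReal (ρ u v) := by
      rw [effResE]
      calc (sInf _)⁻¹ ≤ (ENNReal.ofReal (1 / ρ u v))⁻¹ := ENNReal.inv_le_inv.mpr hlb
        _ = ENNReal.ofReal (ρ u v) := by
            rw [one_div, ENNReal.ofReal_inv_of_pos hρp, inv_inv]
    exact (ENNReal.ofReal_le_ofReal_iff hρp.le).mp (le_trans (hsep u hu v hv huv) h2)
  -- Foster's identity
  set n := 𝒮.card with hn
  have R1 : ∀ s ∈ 𝒮, ∀ w ∈ 𝒮, ∑ t ∈ 𝒮, ℓ s t * ψ w t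
      = (if s = w then (1:ℝ) else 0) - (if s = v₀ then 1 else 0) := by
    intro s hs w hw
    have h0 := ψval w ((mem𝒮 w).mp hw) s ((mem𝒮 s).mp hs)
    rw [hexp s (ψ w)] at h0
    rw [Finset.sum_congr rfl fun t _ => mul_comm (ℓ s t) (ψ w t)]
    exact h0
  have foster : ∑ u ∈ 𝒮, ∑ v ∈ 𝒮, ℓ u v * ρ u v = -(2 * ((n:ℝ) - 1)) := by
    have e0 : ∀ u ∈ 𝒮, ∀ v ∈ 𝒮, ℓ u v * ρ u v
        = ℓ u v * ψ u u + ℓ u v * ψ v v - ℓ u v * ψ u v - ℓ u v * ψ v u := by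
      intro u _ v _
      rw [hρdef]; ring
    rw [Finset.sum_congr rfl fun u hu => Finset.sum_congr rfl fun v hv => e0 u hu v hv]
    simp only [Finset.sum_sub_distrib, Finset.sum_add_distrib]
    have e1 : ∑ u ∈ 𝒮, ∑ v ∈ 𝒮, ℓ u v * ψ u u = 0 := by
      refine Finset.sum_eq_zero fun u _ => ?_
      rw [← Finset.sum_mul, rowsum u, zero_mul]
    have e2 : ∑ u ∈ 𝒮, ∑ v ∈ 𝒮, ℓ u v * ψ v v = 0 := by
      rw [Finset.sum_comm]
      refine Finset.sum_eq_zero fun v _ => ?_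
      rw [← Finset.sum_mul, Finset.sum_congr rfl (fun u _ => ℓsymm u v), rowsum v, zero_mul]
    have e3 : ∑ u ∈ 𝒮, ∑ v ∈ 𝒮, ℓ u v * ψ u v = (n:ℝ) - 1 := by
      rw [Finset.sum_congr rfl fun u hu => R1 u hu u hu]
      rw [Finset.sum_sub_distrib]
      simp only [if_pos rfl]
      rw [Finset.sum_ite_eq' 𝒮 v₀ fun _ => (1:ℝ), if_pos hv₀𝒮]
      simp [hn]
    have e4 : ∑ u ∈ 𝒮, ∑ v ∈ 𝒮, ℓ u v * ψ v u = (n:ℝ) - 1 := by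
      rw [Finset.sum_comm]
      rw [Finset.sum_congr rfl fun v hv =>
        Finset.sum_congr rfl fun u _ => by rw [ℓsymm u v]]
      rw [Finset.sum_congr rfl fun v hv => R1 v hv v hv]
      rw [Finset.sum_sub_distrib]
      simp only [if_pos rfl]
      rw [Finset.sum_ite_eq' 𝒮 v₀ fun _ => (1:ℝ), if_pos hv₀𝒮]
      simp [hn]
    rw [e1, e2, e3, e4]
    ring
  have hρdiag : ∀ u, ρ u u = 0 := by
    intro u; rw [hρdef]; ring
  have hdiag_sum : ε * ∑ u ∈ 𝒮, ℓ u u ≤ 2 * ((n:ℝ) - 1) := by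
    have step1 : ∀ u ∈ 𝒮, ε * ℓ u u ≤ ∑ v ∈ 𝒮, (-(ℓ u v)) * ρ u v := by
      intro u hu
      have hdiagu : ℓ u u = ∑ v ∈ 𝒮.erase u, (-(ℓ u v)) := by
        have h0 := Finset.sum_erase_add 𝒮 (fun v => ℓ u v) hu
        rw [rowsum u] at h0
        rw [Finset.sum_neg_distrib]
        linarith
      have h1 : ε * ℓ u u = ∑ v ∈ 𝒮.erase u, ε * (-(ℓ u v)) := by
        rw [hdiagu, Finset.mul_sum]
      rw [h1]
      have h2 : ∑ v ∈ 𝒮.erase u, ε * (-(ℓ u v)) ≤ ∑ v ∈ 𝒮.erase u, (-(ℓ u v)) * ρ u v := by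
        refine Finset.sum_le_sum fun v hv => ?_
        have hv𝒮 := Finset.mem_of_mem_erase hv
        have hvne : v ≠ u := Finset.ne_of_mem_erase hv
        have hnnl : 0 ≤ -(ℓ u v) := by
          have := offdiag u ((mem𝒮 u).mp hu) v ((mem𝒮 v).mp hv𝒮) (Ne.symm hvne)
          linarith
        have hge := hρge u ((mem𝒮 u).mp hu) v ((mem𝒮 v).mp hv𝒮) (Ne.symm hvne)
        nlinarith
      refine le_trans h2 ?_
      rw [← Finset.sum_erase_add 𝒮 (fun v => (-(ℓ u v)) * ρ u v) hu, hρdiag u]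
      simp
    have step2 : ε * ∑ u ∈ 𝒮, ℓ u u ≤ ∑ u ∈ 𝒮, ∑ v ∈ 𝒮, (-(ℓ u v)) * ρ u v := by
      rw [Finset.mul_sum]
      exact Finset.sum_le_sum step1
    have step3 : ∑ u ∈ 𝒮, ∑ v ∈ 𝒮, (-(ℓ u v)) * ρ u v = 2 * ((n:ℝ) - 1) := by
      have : ∀ u ∈ 𝒮, ∀ v ∈ 𝒮, (-(ℓ u v)) * ρ u v = -(ℓ u v * ρ u v) := by
        intro u _ v _; ring
      rw [Finset.sum_congr rfl fun u hu => Finset.sum_congr rfl fun v hv => this u hu v hv]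
      simp only [Finset.sum_neg_distrib]
      rw [foster]
      ring
    linarith
  -- Markov argument
  set Good : Finset V := 𝒮.filter (fun v => ℓ v v ≤ 4 / ε) with hGood
  set Bad : Finset V := 𝒮.filter (fun v => ¬ (ℓ v v ≤ 4 / ε)) with hBad
  have hsplit : Good.card + Bad.card = n :=
    Finset.card_filter_add_card_filter_not _
  have hdiag_nn : ∀ u ∈ 𝒮, 0 ≤ ℓ u u := fun u _ => B_nonneg c hnn (h u)
  have hBadcard : 2 * Bad.card ≤ n := by
    have hb1 : (Bad.card : ℝ) * (4 / ε) ≤ ∑ u ∈ Bad, ℓ u u := by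
      have := Finset.card_nsmul_le_sum Bad (fun u => ℓ u u) (4 / ε)
        (fun u hu => le_of_not_ge (Finset.mem_filter.mp hu).2)
      rwa [nsmul_eq_mul] at this
    have hb2 : ∑ u ∈ Bad, ℓ u u ≤ ∑ u ∈ 𝒮, ℓ u u :=
      Finset.sum_le_sum_of_subset_of_nonneg (Finset.filter_subset _ _)
        (fun u hu _ => hdiag_nn u hu)
    have hc1 : (Bad.card : ℝ) * 4 ≤ ε * ∑ u ∈ 𝒮, ℓ u u := by
      have he : (Bad.card : ℝ) * 4 = ε * ((Bad.card : ℝ) * (4 / ε)) := by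
        rw [mul_left_comm, mul_div_assoc', mul_comm ε 4, mul_div_assoc, div_self hε.ne', mul_one]
      rw [he]
      exact mul_le_mul_of_nonneg_left (le_trans hb1 hb2) hε.le
    have hc2 : (Bad.card : ℝ) * 4 ≤ 2 * ((n : ℝ) - 1) := le_trans hc1 hdiag_sum
    have hc3 : 2 * (Bad.card : ℝ) ≤ (n : ℝ) := by linarith
    exact_mod_cast hc3
  refine ⟨↑Good, ?_, ?_, ?_⟩
  · intro x hx
    exact (mem𝒮 x).mp (Finset.mem_filter.mp (Finset.mem_coe.mp hx)).1
  · rw [Set.ncard_coe_finset]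
    have hS : S.ncard = n := Set.ncard_eq_toFinset_card' S
    omega
  · intro v hv
    have hvf := Finset.mem_filter.mp (Finset.mem_coe.mp hv)
    have hvS : v ∈ S := (mem𝒮 v).mp hvf.1
    have hvle : ℓ v v ≤ 4 / ε := hvf.2
    have hmem : ENNReal.ofReal (energy c (h v)) ∈ {e : ℝ≥0∞ | ∃ f : V → ℝ,
        (∀ a ∈ ({v} : Set V), f a = 1) ∧ (∀ b ∈ S \ {v}, f b = 0) ∧
        e = ENNReal.ofReal (energy c f)} := by
      refine ⟨h v, ?_, ?_, rfl⟩
      · intro a ha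
        rw [Set.mem_singleton_iff] at ha
        rw [ha, hagree v v hvS]
        simp [ind]
      · intro b hb
        obtain ⟨hbS, hbv⟩ := hb
        rw [hagree v b hbS]
        have hbv' : b ≠ v := fun hc => hbv (Set.mem_singleton_iff.mpr hc)
        simp [ind, hbv']
    have h1 : sInf {e : ℝ≥0∞ | ∃ f : V → ℝ,
        (∀ a ∈ ({v} : Set V), f a = 1) ∧ (∀ b ∈ S \ {v}, f b = 0) ∧
        e = ENNReal.ofReal (energy c f)} ≤ ENNReal.ofReal (4 / ε) := by
      refine le_trans (sInf_le hmem) (ENNReal.ofReal_le_ofReal ?_)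
      rw [energy_eq_B, ← hℓdef v v]
      exact hvle
    rw [effResE]
    have h2 : ENNReal.ofReal (ε / 4) = (ENNReal.ofReal (4 / ε))⁻¹ := by
      rw [← ENNReal.ofReal_inv_of_pos (show (0:ℝ) < 4 / ε by positivity), inv_div]
    rw [h2]
    exact ENNReal.inv_le_inv.mpr h1
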